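/- Consider A = ℂ ⊕ M₂(ℂ) acting on H = ℂ¹⁰ via π(c,m) = diag(m, c, c, c, m, m, c) (blocks in that order) and the involution T = diag(I₂, 1, 1, 1, −I₂, −I₂, −1). Then the eigenspaces H₊, H₋ of T both have dimension 5 and the restricted representations π₊, π₋ are both faithful, but there is no invertible operator S : H₋ → H₊ conjugating π₋ into π₊; indeed Tr(π₊(c,m)) = Tr(m) + 3c ≠ 2Tr(m) + c = Tr(π₋(c,m)) for some (c,m). -/

import Mathlib

open Matrix

/-- Embedding of `Fin 2` from a natural number (used to address matrix blocks). -/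
def f2 (n : ℕ) : Fin 2 := ⟨n % 2, Nat.mod_lt _ (by norm_num)⟩

/-- The representation π(c,m) = diag(m, c, c, c, m, m, c) of ℂ ⊕ M₂(ℂ) on ℂ¹⁰. -/
def pi10 (c : ℂ) (m : Matrix (Fin 2) (Fin 2) ℂ) : Matrix (Fin 10) (Fin 10) ℂ :=
  Matrix.of fun i j =>
    if i.val < 2 ∧ j.val < 2 then m (f2 i.val) (f2 j.val)
    else if i = j ∧ 2 ≤ i.val ∧ i.val < 5 then c
    else if 5 ≤ i.val ∧ i.val < 7 ∧ 5 ≤ j.val ∧ j.val < 7 then m (f2 (i.val - 5)) (f2 (j.val - 5))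
    else if 7 ≤ i.val ∧ i.val < 9 ∧ 7 ≤ j.val ∧ j.val < 9 then m (f2 (i.val - 7)) (f2 (j.val - 7))
    else if i = j ∧ i.val = 9 then c
    else 0

/-- The twisting involution T = diag(I₂, 1, 1, 1, −I₂, −I₂, −1) on ℂ¹⁰. -/
def T10 : Matrix (Fin 10) (Fin 10) ℂ :=
  Matrix.diagonal fun i => if i.val < 5 then (1:ℂ) else -1

/-- Embedding of the +1 eigenspace coordinates. -/
def eplus (i : Fin 5) : Fin 10 := ⟨i.val, by omega⟩

/-- Embedding of the −1 eigenspace coordinates. -/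
def eminus (i : Fin 5) : Fin 10 := ⟨i.val + 5, by omega⟩

lemma ker_diag_aux (w : Fin 10 → ℂ) (h : Fintype.card {i // w i ≠ 0} = 5) :
    Module.finrank ℂ (LinearMap.ker (Matrix.toLin' (Matrix.diagonal w))) = 5 := by
  have hr : LinearMap.rank (Matrix.toLin' (Matrix.diagonal w)) =
      Fintype.card {i // w i ≠ 0} := LinearMap.rank_diagonal w
  have hfr : Module.finrank ℂ (LinearMap.range (Matrix.toLin' (Matrix.diagonal w))) = 5 :=
    Module.finrank_eq_of_rank_eq (by rw [← LinearMap.rank, hr, h])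
  have hrn := LinearMap.finrank_range_add_finrank_ker (Matrix.toLin' (Matrix.diagonal w))
  rw [hfr] at hrn
  simp [Module.finrank_pi] at hrn
  omega

lemma ep_diag (c : ℂ) (m : Matrix (Fin 2) (Fin 2) ℂ) :
    ((pi10 c m).submatrix eplus eplus) = Matrix.of fun i j : Fin 5 =>
      if i.val < 2 ∧ j.val < 2 then m (f2 i.val) (f2 j.val)
      else if i = j ∧ 2 ≤ i.val then c else 0 := by
  ext i j
  fin_cases i <;> fin_cases j <;>
    simp (config := {decide := true}) [pi10, eplus, f2, Fin.ext_iff]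

lemma em_diag (c : ℂ) (m : Matrix (Fin 2) (Fin 2) ℂ) :
    ((pi10 c m).submatrix eminus eminus) = Matrix.of fun i j : Fin 5 =>
      if i.val < 2 ∧ j.val < 2 then m (f2 i.val) (f2 j.val)
      else if 2 ≤ i.val ∧ i.val < 4 ∧ 2 ≤ j.val ∧ j.val < 4 then m (f2 (i.val-2)) (f2 (j.val-2))
      else if i = j ∧ i.val = 4 then c else 0 := by
  ext i j
  fin_cases i <;> fin_cases j <;>
    simp (config := {decide := true}) [pi10, eminus, f2, Fin.ext_iff] <;>
      (congr <;> decide)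

theorem stmt_13 :
    Module.finrank ℂ (LinearMap.ker (Matrix.toLin' T10 - 1)) = 5 ∧
    Module.finrank ℂ (LinearMap.ker (Matrix.toLin' T10 + 1)) = 5 ∧
    Function.Injective (fun p : ℂ × Matrix (Fin 2) (Fin 2) ℂ =>
      (pi10 p.1 p.2).submatrix eplus eplus) ∧
    Function.Injective (fun p : ℂ × Matrix (Fin 2) (Fin 2) ℂ =>
      (pi10 p.1 p.2).submatrix eminus eminus) ∧
    (∀ (c : ℂ) (m : Matrix (Fin 2) (Fin 2) ℂ),
      ((pi10 c m).submatrix eplus eplus).trace = m.trace + 3 * c ∧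
      ((pi10 c m).submatrix eminus eminus).trace = 2 * m.trace + c) ∧
    (∃ (c : ℂ) (m : Matrix (Fin 2) (Fin 2) ℂ),
      ((pi10 c m).submatrix eplus eplus).trace ≠ ((pi10 c m).submatrix eminus eminus).trace) ∧
    ¬ ∃ S : Matrix (Fin 5) (Fin 5) ℂ, IsUnit S ∧
      ∀ (c : ℂ) (m : Matrix (Fin 2) (Fin 2) ℂ),
        (pi10 c m).submatrix eplus eplus = S * (pi10 c m).submatrix eminus eminus * S⁻¹ := by
  have htr : ∀ (c : ℂ) (m : Matrix (Fin 2) (Fin 2) ℂ),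
      ((pi10 c m).submatrix eplus eplus).trace = m.trace + 3 * c ∧
      ((pi10 c m).submatrix eminus eminus).trace = 2 * m.trace + c := by
    intro c m
    constructor
    · have e0 : (pi10 c m).submatrix eplus eplus 0 0 = m 0 0 := by
        simp (config := {decide := true}) [pi10, eplus, f2]
      have e1 : (pi10 c m).submatrix eplus eplus 1 1 = m 1 1 := by
        simp (config := {decide := true}) [pi10, eplus, f2]
      have e2 : (pi10 c m).submatrix eplus eplus 2 2 = c := by
        simp (config := {decide := true}) [pi10, eplus, f2]
      have e3 : (pi10 c m).submatrix eplus eplus 3 3 = c := by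
        simp (config := {decide := true}) [pi10, eplus, f2]
      have e4 : (pi10 c m).submatrix eplus eplus 4 4 = c := by
        simp (config := {decide := true}) [pi10, eplus, f2]
      rw [Matrix.trace, Fin.sum_univ_five, Matrix.trace_fin_two]
      simp only [Matrix.diag, e0, e1, e2, e3, e4]
      ring
    · have e0 : (pi10 c m).submatrix eminus eminus 0 0 = m 0 0 := by
        simp (config := {decide := true}) [pi10, eminus, f2]
      have e1 : (pi10 c m).submatrix eminus eminus 1 1 = m 1 1 := by
        simp (config := {decide := true}) [pi10, eminus, f2]
      have e2 : (pi10 c m).submatrix eminus eminus 2 2 = m 0 0 := by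
        simp (config := {decide := true}) [pi10, eminus, f2]
      have e3 : (pi10 c m).submatrix eminus eminus 3 3 = m 1 1 := by
        simp (config := {decide := true}) [pi10, eminus, f2]
      have e4 : (pi10 c m).submatrix eminus eminus 4 4 = c := by
        simp (config := {decide := true}) [pi10, eminus, f2]
      rw [Matrix.trace, Fin.sum_univ_five, Matrix.trace_fin_two]
      simp only [Matrix.diag, e0, e1, e2, e3, e4]
      ring
  have hex : ∃ (c : ℂ) (m : Matrix (Fin 2) (Fin 2) ℂ),
      ((pi10 c m).submatrix eplus eplus).trace ≠ ((pi10 c m).submatrix eminus eminus).trace := by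
    refine ⟨1, 0, ?_⟩
    rw [(htr 1 0).1, (htr 1 0).2]
    simp
  refine ⟨?_, ?_, ?_, ?_, htr, hex, ?_⟩
  · have h1 : Matrix.toLin' T10 - 1 =
        Matrix.toLin' (Matrix.diagonal fun i : Fin 10 => (if i.val < 5 then (1:ℂ) else -1) - 1) := by
      rw [show (1 : (Fin 10 → ℂ) →ₗ[ℂ] (Fin 10 → ℂ)) = Matrix.toLin' 1 from
        Matrix.toLin'_one.symm, ← map_sub, T10, ← Matrix.diagonal_one, Matrix.diagonal_sub]
    rw [h1]
    apply ker_diag_aux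
    rw [Fintype.card_congr (Equiv.subtypeEquivRight (q := fun i : Fin 10 => 5 ≤ i.val)
      (fun i => by by_cases h : i.val < 5 <;> simp [h] <;> norm_num <;> omega))]
    decide
  · have h1 : Matrix.toLin' T10 + 1 =
        Matrix.toLin' (Matrix.diagonal fun i : Fin 10 => (if i.val < 5 then (1:ℂ) else -1) + 1) := by
      rw [show (1 : (Fin 10 → ℂ) →ₗ[ℂ] (Fin 10 → ℂ)) = Matrix.toLin' 1 from
        Matrix.toLin'_one.symm, ← map_add, T10, ← Matrix.diagonal_one, Matrix.diagonal_add]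
    rw [h1]
    apply ker_diag_aux
    rw [Fintype.card_congr (Equiv.subtypeEquivRight (q := fun i : Fin 10 => i.val < 5)
      (fun i => by by_cases h : i.val < 5 <;> simp [h] <;> norm_num <;> omega))]
    decide
  · intro ⟨c, m⟩ ⟨c', m'⟩ h
    simp only [ep_diag] at h
    have he := fun i j : Fin 5 => congrFun (congrFun (congrArg (fun M => (M : Fin 5 → Fin 5 → ℂ)) h) i) j
    refine Prod.ext ?_ ?_
    · have := he 2 2; simpa [f2] using this
    · ext i j
      fin_cases i <;> fin_cases j <;>
        [skip; skip; skip; skip] <;>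
        first
          | (have := he 0 0; simpa [f2] using this)
          | (have := he 0 1; simpa [f2] using this)
          | (have := he 1 0; simpa [f2] using this)
          | (have := he 1 1; simpa [f2] using this)
  · intro ⟨c, m⟩ ⟨c', m'⟩ h
    simp only [em_diag] at h
    have he := fun i j : Fin 5 => congrFun (congrFun (congrArg (fun M => (M : Fin 5 → Fin 5 → ℂ)) h) i) j
    refine Prod.ext ?_ ?_
    · have := he 4 4; simpa [f2] using this
    · ext i j
      fin_cases i <;> fin_cases j <;>
        first
          | (have := he 0 0; simpa [f2] using this)
          | (have := he 0 1; simpa [f2] using this)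
          | (have := he 1 0; simpa [f2] using this)
          | (have := he 1 1; simpa [f2] using this)
  · rintro ⟨S, hU, hconj⟩
    obtain ⟨c, m, hne⟩ := hex
    apply hne
    rw [hconj c m, Matrix.trace_mul_cycle, Matrix.nonsing_inv_mul S
      ((Matrix.isUnit_iff_isUnit_det S).mp hU), Matrix.one_mul]
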